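/- arXiv:1312.6816 — 2 statements merged into one kernel-verified Lean document; each statement's English description precedes it below -/
import Mathlib

section
/- The creation and annihilation operators form commutative families: for all λ, μ ∈ ℂ, B(λ) B(μ) = B(μ) B(λ) and C(λ) C(μ) = C(μ) C(λ) as operators on (ℂ²)^{⊗L}. -/
noncomputable section

/-- `a(λ) = sinh(λ + γ)` -/
def af (γ lam : ℂ) : ℂ := Complex.sinh (lam + γ)

/-- `b(λ) = sinh(λ)` -/
def bf (lam : ℂ) : ℂ := Complex.sinh lam

/-- `c(λ) = sinh(γ)` (a constant function of `λ`). -/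
def cf (γ : ℂ) (_lam : ℂ) : ℂ := Complex.sinh γ

/-- The six-vertex R-matrix on `ℂ² ⊗ ℂ²`, in the ordered basis
`(e₁⊗e₁, e₁⊗e₂, e₂⊗e₁, e₂⊗e₂)` encoded by pairs `(i, j) : Fin 2 × Fin 2`. -/
def Rmat (γ lam : ℂ) : Matrix (Fin 2 × Fin 2) (Fin 2 × Fin 2) ℂ :=
  fun p q =>
    if p = q then (if p.1 = p.2 then af γ lam else bf lam)
    else if p.1 = q.2 ∧ p.2 = q.1 then cf γ lam else 0

/-- `R_{ai}(λ)` on `ℂ² ⊗ (ℂ²)^{⊗L}`: `R(λ)` on the auxiliary factor and the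
`i`-th quantum factor, identity elsewhere.  A vector of the space is indexed by
a pair `(auxiliary index, quantum indices)`. -/
def Rai (γ : ℂ) {L : ℕ} (lam : ℂ) (i : Fin L) :
    Matrix (Fin 2 × (Fin L → Fin 2)) (Fin 2 × (Fin L → Fin 2)) ℂ :=
  fun p q =>
    Rmat γ lam (p.1, p.2 i) (q.1, q.2 i) *
      (if ∀ k, k ≠ i → p.2 k = q.2 k then 1 else 0)

/-- The monodromy matrix `T(λ) = R_{a1}(λ−μ₁) R_{a2}(λ−μ₂) ⋯ R_{aL}(λ−μ_L)`. -/
def Tmat (γ : ℂ) {L : ℕ} (μ : Fin L → ℂ) (lam : ℂ) :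
    Matrix (Fin 2 × (Fin L → Fin 2)) (Fin 2 × (Fin L → Fin 2)) ℂ :=
  (List.ofFn fun i : Fin L => Rai γ (lam - μ i) i).prod

/-- `A(λ)`: the (1,1) block of `T(λ)` with respect to the auxiliary factor. -/
def Aop (γ : ℂ) {L : ℕ} (μ : Fin L → ℂ) (lam : ℂ) :
    Matrix (Fin L → Fin 2) (Fin L → Fin 2) ℂ :=
  fun p q => Tmat γ μ lam (0, p) (0, q)

/-- `B(λ)`: the (1,2) block of `T(λ)` with respect to the auxiliary factor. -/
def Bop (γ : ℂ) {L : ℕ} (μ : Fin L → ℂ) (lam : ℂ) :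
    Matrix (Fin L → Fin 2) (Fin L → Fin 2) ℂ :=
  fun p q => Tmat γ μ lam (0, p) (1, q)

/-- `C(λ)`: the (2,1) block of `T(λ)` with respect to the auxiliary factor. -/
def Cop (γ : ℂ) {L : ℕ} (μ : Fin L → ℂ) (lam : ℂ) :
    Matrix (Fin L → Fin 2) (Fin L → Fin 2) ℂ :=
  fun p q => Tmat γ μ lam (1, p) (0, q)

/-- `D(λ)`: the (2,2) block of `T(λ)` with respect to the auxiliary factor. -/
def Dop (γ : ℂ) {L : ℕ} (μ : Fin L → ℂ) (lam : ℂ) :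
    Matrix (Fin L → Fin 2) (Fin L → Fin 2) ℂ :=
  fun p q => Tmat γ μ lam (1, p) (1, q)

/-- The vector `|0⟩ = e₁^{⊗L}`. -/
def v0 {L : ℕ} : (Fin L → Fin 2) → ℂ :=
  fun p => if p = (fun _ => 0) then 1 else 0

/-- The vector `|0̄⟩ = e₂^{⊗L}`. -/
def v0bar {L : ℕ} : (Fin L → Fin 2) → ℂ :=
  fun p => if p = (fun _ => 1) then 1 else 0

/-! ### Auxiliary development -/

open Matrix Kronecker

set_option maxHeartbeats 1000000

/-- Index type for three tensor factors of `ℂ²`. -/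
abbrev SVIx := Fin 2 × Fin 2 × Fin 2

/-- `R` acting on factors 1,2 of three factors. -/
def sr12 (γ u : ℂ) : Matrix SVIx SVIx ℂ :=
  fun p q => Rmat γ u (p.1, p.2.1) (q.1, q.2.1) * (if p.2.2 = q.2.2 then 1 else 0)

/-- `R` acting on factors 1,3 of three factors. -/
def sr13 (γ u : ℂ) : Matrix SVIx SVIx ℂ :=
  fun p q => Rmat γ u (p.1, p.2.2) (q.1, q.2.2) * (if p.2.1 = q.2.1 then 1 else 0)

/-- `R` acting on factors 2,3 of three factors. -/
def sr23 (γ u : ℂ) : Matrix SVIx SVIx ℂ :=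
  fun p q => Rmat γ u (p.2.1, p.2.2) (q.2.1, q.2.2) * (if p.1 = q.1 then 1 else 0)

/-- The Yang–Baxter equation for the six-vertex R-matrix. -/
theorem sYBE (γ x y : ℂ) :
    sr12 γ (x - y) * (sr13 γ x * sr23 γ y) = sr23 γ y * (sr13 γ x * sr12 γ (x - y)) := by
  ext p q
  obtain ⟨a, b, c⟩ := p
  obtain ⟨d, e, f⟩ := q
  simp only [Matrix.mul_apply, Fintype.sum_prod_type, Fin.sum_univ_two, sr12, sr13, sr23, Rmat,
    af, bf, cf]
  fin_cases a <;> fin_cases b <;> fin_cases c <;> fin_cases d <;> fin_cases e <;> fin_cases f <;>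
    · norm_num [Prod.ext_iff]
      try (simp only [Complex.sinh_add, Complex.sinh_sub, Complex.cosh_add, Complex.cosh_sub]
           first
             | ring1
             | (ring_nf; simp only [Complex.cosh_sq]; ring1))

section Emb

variable {ι α β : Type*} [Fintype ι] [Fintype α] [Fintype β]
  [DecidableEq ι] [DecidableEq α] [DecidableEq β]

/-- Embed a matrix on `α` into a matrix on `ι ≃ α × β`, identity on `β`. -/
def emb (e : ι ≃ α × β) (M : Matrix α α ℂ) : Matrix ι ι ℂ :=
  Matrix.reindex e.symm e.symm (M ⊗ₖ (1 : Matrix β β ℂ))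

/-- Embed a matrix on `β` into a matrix on `ι ≃ α × β`, identity on `α`. -/
def embR (e : ι ≃ α × β) (N : Matrix β β ℂ) : Matrix ι ι ℂ :=
  Matrix.reindex e.symm e.symm ((1 : Matrix α α ℂ) ⊗ₖ N)

lemma emb_apply (e : ι ≃ α × β) (M : Matrix α α ℂ) (p q : ι) :
    emb e M p q = M (e p).1 (e q).1 * (if (e p).2 = (e q).2 then 1 else 0) := by
  simp [emb, Matrix.one_apply, Matrix.kroneckerMap_apply]

lemma embR_apply (e : ι ≃ α × β) (N : Matrix β β ℂ) (p q : ι) :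
    embR e N p q = (if (e p).1 = (e q).1 then 1 else 0) * N (e p).2 (e q).2 := by
  simp [embR, Matrix.one_apply, Matrix.kroneckerMap_apply]

lemma emb_mul (e : ι ≃ α × β) (M N : Matrix α α ℂ) :
    emb e M * emb e N = emb e (M * N) := by
  simp only [emb, Matrix.reindex_apply, Equiv.symm_symm]
  rw [Matrix.submatrix_mul_equiv, ← Matrix.mul_kronecker_mul, Matrix.one_mul]

lemma emb_one (e : ι ≃ α × β) : emb e (1 : Matrix α α ℂ) = 1 := by
  simp only [emb, Matrix.one_kronecker_one, Matrix.reindex_apply, Equiv.symm_symm,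
    Matrix.submatrix_one_equiv]

lemma emb_embR_comm (e : ι ≃ α × β) (M : Matrix α α ℂ) (N : Matrix β β ℂ) :
    emb e M * embR e N = embR e N * emb e M := by
  simp only [emb, embR, Matrix.reindex_apply, Equiv.symm_symm]
  rw [Matrix.submatrix_mul_equiv, Matrix.submatrix_mul_equiv, ← Matrix.mul_kronecker_mul,
    ← Matrix.mul_kronecker_mul, Matrix.one_mul, Matrix.mul_one, Matrix.one_mul, Matrix.mul_one]

lemma emb_listProd (e : ι ≃ α × β) (s : List (Matrix α α ℂ)) :
    emb e s.prod = (s.map (emb e)).prod := by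
  induction s with
  | nil => simpa using emb_one e
  | cons a t ih => rw [List.prod_cons, ← emb_mul, ih, List.map_cons, List.prod_cons]

end Emb

variable {L : ℕ}

/-- Index of `ℂ² ⊗ ℂ² ⊗ (ℂ²)^{⊗L}` (two auxiliary spaces). -/
abbrev BIx (L : ℕ) := (Fin 2 × Fin 2) × (Fin L → Fin 2)

/-- Split off (aux 1, quantum space). -/
def eA1 : BIx L ≃ (Fin 2 × (Fin L → Fin 2)) × Fin 2 where
  toFun p := ((p.1.1, p.2), p.1.2)
  invFun q := ((q.1.1, q.2), q.1.2)
  left_inv p := rfl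
  right_inv q := rfl

/-- Split off (aux 2, quantum space). -/
def eA2 : BIx L ≃ (Fin 2 × (Fin L → Fin 2)) × Fin 2 where
  toFun p := ((p.1.2, p.2), p.1.1)
  invFun q := ((q.2, q.1.1), q.1.2)
  left_inv p := rfl
  right_inv q := rfl

/-- Split off (aux1, aux2, site i). -/
def eOne (i : Fin L) : BIx L ≃ SVIx × ({k : Fin L // k ≠ i} → Fin 2) where
  toFun p := ((p.1.1, p.1.2, p.2 i), fun k => p.2 k)
  invFun q := ((q.1.1, q.1.2.1), fun k => if h : k = i then q.1.2.2 else q.2 ⟨k, h⟩)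
  left_inv p := by
    refine Prod.ext rfl (funext fun k => ?_)
    dsimp only
    split_ifs with h
    · subst h; rfl
    · rfl
  right_inv q := by
    refine Prod.ext ?_ (funext fun k => ?_)
    · dsimp only
      rw [dif_pos rfl]
    · dsimp only
      rw [dif_neg k.2]

/-- Split off (aux1, site i) and (aux2, site j) with remaining sites. -/
def eTwo (i j : Fin L) (hij : i ≠ j) :
    BIx L ≃ (Fin 2 × Fin 2) × ((Fin 2 × Fin 2) × ({k : Fin L // k ≠ i ∧ k ≠ j} → Fin 2)) where
  toFun p := ((p.1.1, p.2 i), ((p.1.2, p.2 j), fun k => p.2 k))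
  invFun q := ((q.1.1, q.2.1.1),
    fun k => if h : k = i then q.1.2 else if h' : k = j then q.2.1.2 else q.2.2 ⟨k, h, h'⟩)
  left_inv p := by
    refine Prod.ext rfl (funext fun k => ?_)
    dsimp only
    split_ifs with h h'
    · subst h; rfl
    · subst h'; rfl
    · rfl
  right_inv q := by
    refine Prod.ext ?_ (Prod.ext ?_ (funext fun k => ?_))
    · dsimp only
      rw [dif_pos rfl]
    · dsimp only
      rw [dif_neg (Ne.symm hij), dif_pos rfl]
    · dsimp only
      rw [dif_neg k.2.1, dif_neg k.2.2]

/-- First extension of an operator on `ℂ² ⊗ (ℂ²)^{⊗L}`. -/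
def Ext1 (X : Matrix (Fin 2 × (Fin L → Fin 2)) (Fin 2 × (Fin L → Fin 2)) ℂ) :
    Matrix (BIx L) (BIx L) ℂ := emb eA1 X

/-- Second extension of an operator on `ℂ² ⊗ (ℂ²)^{⊗L}`. -/
def Ext2 (X : Matrix (Fin 2 × (Fin L → Fin 2)) (Fin 2 × (Fin L → Fin 2)) ℂ) :
    Matrix (BIx L) (BIx L) ℂ := emb eA2 X

/-- `R₁₂` on the big space. -/
def R12 (γ u : ℂ) : Matrix (BIx L) (BIx L) ℂ :=
  emb (Equiv.refl ((Fin 2 × Fin 2) × (Fin L → Fin 2))) (Rmat γ u)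

lemma indicator_mul_indicator (P Q : Prop) [Decidable P] [Decidable Q] :
    (if P then (1 : ℂ) else 0) * (if Q then 1 else 0) = if P ∧ Q then 1 else 0 := by
  by_cases hP : P <;> by_cases hQ : Q <;> simp [hP, hQ]

lemma Ext1_Rai (γ u : ℂ) (i : Fin L) : Ext1 (Rai γ u i) = emb (eOne i) (sr13 γ u) := by
  ext p q
  rw [Ext1, emb_apply, emb_apply]
  simp only [eA1, eOne, Equiv.coe_fn_mk, Rai, sr13]
  erw [mul_assoc, mul_assoc, indicator_mul_indicator, indicator_mul_indicator]
  congr 1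
  refine if_congr ?_ rfl rfl
  constructor
  · rintro ⟨h1, h2⟩
    exact ⟨h2, funext fun k => h1 k k.2⟩
  · rintro ⟨h2, h1⟩
    exact ⟨fun k hk => congrFun h1 ⟨k, hk⟩, h2⟩

lemma Ext2_Rai (γ u : ℂ) (i : Fin L) : Ext2 (Rai γ u i) = emb (eOne i) (sr23 γ u) := by
  ext p q
  rw [Ext2, emb_apply, emb_apply]
  simp only [eA2, eOne, Equiv.coe_fn_mk, Rai, sr23]
  erw [mul_assoc, mul_assoc, indicator_mul_indicator, indicator_mul_indicator]
  congr 1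
  refine if_congr ?_ rfl rfl
  constructor
  · rintro ⟨h1, h2⟩
    exact ⟨h2, funext fun k => h1 k k.2⟩
  · rintro ⟨h2, h1⟩
    exact ⟨fun k hk => congrFun h1 ⟨k, hk⟩, h2⟩

lemma R12_eOne (γ u : ℂ) (i : Fin L) : (R12 γ u : Matrix (BIx L) (BIx L) ℂ) = emb (eOne i) (sr12 γ u) := by
  ext p q
  rw [R12, emb_apply, emb_apply]
  simp only [eOne, Equiv.coe_fn_mk, Equiv.refl_apply, sr12]
  erw [mul_assoc, indicator_mul_indicator]
  congr 1
  refine if_congr ?_ rfl rfl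
  constructor
  · intro h
    exact ⟨congrFun h i, funext fun k => congrFun h k⟩
  · rintro ⟨h1, h2⟩
    funext k
    by_cases hk : k = i
    · rw [hk]; exact h1
    · exact congrFun h2 ⟨k, hk⟩

lemma Ext1_Rai_eTwo (γ u : ℂ) (i j : Fin L) (hij : i ≠ j) :
    Ext1 (Rai γ u i) = emb (eTwo i j hij) (Rmat γ u) := by
  ext p q
  rw [Ext1, emb_apply, emb_apply]
  simp only [eA1, eTwo, Equiv.coe_fn_mk, Rai]
  erw [mul_assoc, indicator_mul_indicator]
  congr 1
  refine if_congr ?_ rfl rfl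
  rw [Prod.ext_iff, Prod.ext_iff]
  constructor
  · rintro ⟨h1, h2⟩
    exact ⟨⟨h2, h1 j (Ne.symm hij)⟩, funext fun k => h1 k k.2.1⟩
  · rintro ⟨⟨h2, hj⟩, hrest⟩
    refine ⟨fun k hk => ?_, h2⟩
    by_cases hkj : k = j
    · rw [hkj]; exact hj
    · exact congrFun hrest ⟨k, hk, hkj⟩

lemma Ext2_Rai_eTwo (γ v : ℂ) (i j : Fin L) (hij : i ≠ j) :
    Ext2 (Rai γ v j) = embR (eTwo i j hij) (Rmat γ v ⊗ₖ (1 : Matrix ({k : Fin L // k ≠ i ∧ k ≠ j} → Fin 2) ({k : Fin L // k ≠ i ∧ k ≠ j} → Fin 2) ℂ)) := by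
  ext p q
  rw [Ext2, emb_apply, embR_apply]
  simp only [eA2, eTwo, Equiv.coe_fn_mk, Rai, Matrix.kroneckerMap_apply, Matrix.one_apply]
  erw [mul_assoc, indicator_mul_indicator,
    mul_comm (if (p.1.1, p.2 i) = (q.1.1, q.2 i) then (1:ℂ) else 0), mul_assoc,
    indicator_mul_indicator]
  congr 1
  refine if_congr ?_ rfl rfl
  rw [Prod.ext_iff]
  constructor
  · rintro ⟨h1, h2⟩
    exact ⟨funext fun k => h1 k k.2.2, h2, h1 i hij⟩
  · rintro ⟨hrest, h2, hi⟩
    refine ⟨fun k hk => ?_, h2⟩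
    by_cases hki : k = i
    · rw [hki]; exact hi
    · exact congrFun hrest ⟨k, hki, hk⟩

/-- The Yang–Baxter equation on the big space at site `i`. -/
lemma siteYBE (γ u x y : ℂ) (h : u = x - y) (i : Fin L) :
    R12 γ u * (Ext1 (Rai γ x i) * Ext2 (Rai γ y i)) =
      Ext2 (Rai γ y i) * (Ext1 (Rai γ x i) * R12 γ u) := by
  subst h
  rw [R12_eOne γ (x - y) i, Ext1_Rai, Ext2_Rai, emb_mul, emb_mul, emb_mul, emb_mul, sYBE γ x y]

/-- Operators on (aux1, site i) and (aux2, site j) commute for `i ≠ j`. -/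
lemma comm_ij (γ u v : ℂ) (i j : Fin L) (hij : i ≠ j) :
    Ext1 (Rai γ u i) * Ext2 (Rai γ v j) = Ext2 (Rai γ v j) * Ext1 (Rai γ u i) := by
  rw [Ext1_Rai_eTwo γ u i j hij, Ext2_Rai_eTwo γ v i j hij, emb_embR_comm]

lemma comm_list1 (γ v : ℂ) (i : Fin L) (f : Fin L → ℂ) (s : List (Fin L)) (hs : i ∉ s) :
    (s.map fun k => Ext1 (Rai γ (f k) k)).prod * Ext2 (Rai γ v i) =
      Ext2 (Rai γ v i) * (s.map fun k => Ext1 (Rai γ (f k) k)).prod := by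
  induction s with
  | nil => simp
  | cons a t ih =>
    have ha : a ≠ i := fun h => hs (h ▸ List.mem_cons_self (a := a) (l := t))
    have ht : i ∉ t := fun h => hs (List.mem_cons_of_mem a h)
    rw [List.map_cons, List.prod_cons, mul_assoc, ih ht, ← mul_assoc, comm_ij γ (f a) v a i ha,
      mul_assoc]

lemma comm_list2 (γ u : ℂ) (i : Fin L) (f : Fin L → ℂ) (s : List (Fin L)) (hs : i ∉ s) :
    Ext1 (Rai γ u i) * (s.map fun k => Ext2 (Rai γ (f k) k)).prod =
      (s.map fun k => Ext2 (Rai γ (f k) k)).prod * Ext1 (Rai γ u i) := by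
  induction s with
  | nil => simp
  | cons a t ih =>
    have ha : i ≠ a := fun h => hs (h ▸ List.mem_cons_self (a := a) (l := t))
    have ht : i ∉ t := fun h => hs (List.mem_cons_of_mem a h)
    rw [List.map_cons, List.prod_cons, ← mul_assoc, comm_ij γ u (f a) i a ha, mul_assoc, ih ht,
      ← mul_assoc]

/-- The RTT relation, list version. -/
lemma RTT_list (γ l m : ℂ) (μf : Fin L → ℂ) (s : List (Fin L)) (hs : s.Nodup) :
    R12 γ (l - m) * ((s.map fun i => Ext1 (Rai γ (l - μf i) i)).prod *
        (s.map fun i => Ext2 (Rai γ (m - μf i) i)).prod) =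
      ((s.map fun i => Ext2 (Rai γ (m - μf i) i)).prod *
        (s.map fun i => Ext1 (Rai γ (l - μf i) i)).prod) * R12 γ (l - m) := by
  induction s with
  | nil => simp
  | cons a t ih =>
    rw [List.nodup_cons] at hs
    obtain ⟨ha, ht⟩ := hs
    have IH := ih ht
    set A := Ext1 (Rai γ (l - μf a) a) with hA
    set B := Ext2 (Rai γ (m - μf a) a) with hB
    set P := (t.map fun i => Ext1 (Rai γ (l - μf i) i)).prod with hP
    set Q := (t.map fun i => Ext2 (Rai γ (m - μf i) i)).prod with hQ
    set R := (R12 γ (l - m) : Matrix (BIx L) (BIx L) ℂ) with hR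
    have hPB : P * B = B * P := comm_list1 γ (m - μf a) a _ t ha
    have hAQ : A * Q = Q * A := comm_list2 γ (l - μf a) a _ t ha
    have hsite : R * (A * B) = B * (A * R) :=
      siteYBE γ (l - m) (l - μf a) (m - μf a) (by ring) a
    simp only [List.map_cons, List.prod_cons, ← hA, ← hB, ← hP, ← hQ]
    calc R * (A * P * (B * Q))
        = R * (A * B) * (P * Q) := by
          rw [mul_assoc A P (B * Q), ← mul_assoc P B Q, hPB, mul_assoc B P Q,
            ← mul_assoc A B (P * Q), ← mul_assoc R (A * B) (P * Q)]
      _ = B * (A * (R * (P * Q))) := by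
          rw [hsite, mul_assoc B (A * R) (P * Q), mul_assoc A R (P * Q)]
      _ = B * (A * (Q * P * R)) := by rw [IH]
      _ = B * Q * (A * P) * R := by
          rw [mul_assoc Q P R, ← mul_assoc A Q (P * R), hAQ, mul_assoc Q A (P * R),
            ← mul_assoc A P R, ← mul_assoc Q (A * P) R, ← mul_assoc B (Q * (A * P)) R,
            ← mul_assoc B Q (A * P)]

/-- The RTT relation. -/
lemma RTT (γ : ℂ) (μ : Fin L → ℂ) (l m : ℂ) :
    R12 γ (l - m) * (Ext1 (Tmat γ μ l) * Ext2 (Tmat γ μ m)) =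
      (Ext2 (Tmat γ μ m) * Ext1 (Tmat γ μ l)) * R12 γ (l - m) := by
  have h1 : Ext1 (Tmat γ μ l) =
      ((List.finRange L).map fun i => Ext1 (Rai γ (l - μ i) i)).prod := by
    rw [Tmat, Ext1, emb_listProd, List.ofFn_eq_map, List.map_map]
    rfl
  have h2 : Ext2 (Tmat γ μ m) =
      ((List.finRange L).map fun i => Ext2 (Rai γ (m - μ i) i)).prod := by
    rw [Tmat, Ext2, emb_listProd, List.ofFn_eq_map, List.map_map]
    rfl
  rw [h1, h2]
  exact RTT_list γ l m μ (List.finRange L) (List.nodup_finRange L)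

/-! ### Extraction of the B and C relations -/

lemma Rmat_diag_row (γ u : ℂ) (a : Fin 2) (x : Fin 2 × Fin 2) :
    Rmat γ u (a, a) x = if x = (a, a) then af γ u else 0 := by
  obtain ⟨c, d⟩ := x
  fin_cases a <;> fin_cases c <;> fin_cases d <;> simp [Rmat, Prod.ext_iff]

lemma Rmat_diag_col (γ u : ℂ) (a : Fin 2) (x : Fin 2 × Fin 2) :
    Rmat γ u x (a, a) = if x = (a, a) then af γ u else 0 := by
  obtain ⟨c, d⟩ := x
  fin_cases a <;> fin_cases c <;> fin_cases d <;> simp [Rmat, Prod.ext_iff]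

lemma R12_mul_apply (γ u : ℂ) (Y : Matrix (BIx L) (BIx L) ℂ) (a : Fin 2)
    (p2 : Fin L → Fin 2) (q : BIx L) :
    ((R12 γ u : Matrix (BIx L) (BIx L) ℂ) * Y) ((a, a), p2) q = af γ u * Y ((a, a), p2) q := by
  rw [Matrix.mul_apply, Fintype.sum_prod_type]
  simp only [R12, emb_apply, Equiv.refl_apply, Rmat_diag_row, ite_mul, zero_mul, one_mul,
    mul_ite, mul_zero, mul_one]
  rw [Finset.sum_eq_single (a, a)]
  · simp only [if_pos rfl, mul_one]
    rw [Finset.sum_eq_single p2]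
    · simp
    · intro b _ hb
      simp [Ne.symm hb]
    · simp
  · intro b _ hb
    simp [hb]
  · simp

lemma mul_R12_apply (γ u : ℂ) (Y : Matrix (BIx L) (BIx L) ℂ) (a : Fin 2)
    (q2 : Fin L → Fin 2) (p : BIx L) :
    (Y * (R12 γ u : Matrix (BIx L) (BIx L) ℂ)) p ((a, a), q2) = Y p ((a, a), q2) * af γ u := by
  rw [Matrix.mul_apply, Fintype.sum_prod_type]
  simp only [R12, emb_apply, Equiv.refl_apply, Rmat_diag_col, ite_mul, zero_mul, one_mul,
    mul_ite, mul_zero, mul_one]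
  rw [Finset.sum_eq_single (a, a)]
  · simp only [if_pos rfl, mul_one]
    rw [Finset.sum_eq_single q2]
    · simp
    · intro b _ hb
      simp [hb]
    · simp
  · intro b _ hb
    simp [hb]
  · simp

lemma Ext1_mul_Ext2_apply (X Y : Matrix (Fin 2 × (Fin L → Fin 2)) (Fin 2 × (Fin L → Fin 2)) ℂ)
    (a b c d : Fin 2) (p2 q2 : Fin L → Fin 2) :
    (Ext1 X * Ext2 Y) ((a, b), p2) ((c, d), q2) =
      ∑ g : Fin L → Fin 2, X (a, p2) (c, g) * Y (b, g) (d, q2) := by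
  rw [Matrix.mul_apply]
  have hterm : ∀ r : BIx L, Ext1 X ((a, b), p2) r * Ext2 Y r ((c, d), q2)
      = if r.1 = (c, b) then X (a, p2) (c, r.2) * Y (b, r.2) (d, q2) else 0 := by
    rintro ⟨⟨r1, r2⟩, g⟩
    simp only [Ext1, Ext2, emb_apply, eA1, eA2, Equiv.coe_fn_mk]
    by_cases h1 : r1 = c
    · by_cases h2 : r2 = b
      · subst h1; subst h2
        simp [Prod.ext_iff]
      · have h2' : ¬ b = r2 := fun h => h2 h.symm
        simp [Prod.ext_iff, h2, h2']
    · simp [Prod.ext_iff, h1]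
  rw [Finset.sum_congr rfl (fun r _ => hterm r), Fintype.sum_prod_type, Finset.sum_comm]
  simp [Finset.sum_ite_eq']

lemma Ext2_mul_Ext1_apply (Y X : Matrix (Fin 2 × (Fin L → Fin 2)) (Fin 2 × (Fin L → Fin 2)) ℂ)
    (a b c d : Fin 2) (p2 q2 : Fin L → Fin 2) :
    (Ext2 Y * Ext1 X) ((a, b), p2) ((c, d), q2) =
      ∑ g : Fin L → Fin 2, Y (b, p2) (d, g) * X (a, g) (c, q2) := by
  rw [Matrix.mul_apply]
  have hterm : ∀ r : BIx L, Ext2 Y ((a, b), p2) r * Ext1 X r ((c, d), q2)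
      = if r.1 = (a, d) then Y (b, p2) (d, r.2) * X (a, r.2) (c, q2) else 0 := by
    rintro ⟨⟨r1, r2⟩, g⟩
    simp only [Ext1, Ext2, emb_apply, eA1, eA2, Equiv.coe_fn_mk]
    by_cases h1 : r1 = a
    · by_cases h2 : r2 = d
      · subst h1; subst h2
        simp [Prod.ext_iff]
      · simp [Prod.ext_iff, h2]
    · have h1' : ¬ a = r1 := fun h => h1 h.symm
      simp [Prod.ext_iff, h1, h1']
  rw [Finset.sum_congr rfl (fun r _ => hterm r), Fintype.sum_prod_type, Finset.sum_comm]
  simp [Finset.sum_ite_eq']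

/-- The commutation relations at generic spectral parameters. -/
lemma generic_comm (γ : ℂ) (μ : Fin L → ℂ) (l m : ℂ) (h : af γ (l - m) ≠ 0) :
    (Bop γ μ l * Bop γ μ m = Bop γ μ m * Bop γ μ l) ∧
      (Cop γ μ l * Cop γ μ m = Cop γ μ m * Cop γ μ l) := by
  have hRTT := RTT γ μ l m
  constructor
  · ext p q
    have h1 := congrFun (congrFun hRTT ((0, 0), p)) ((1, 1), q)
    rw [R12_mul_apply, mul_R12_apply, Ext1_mul_Ext2_apply, Ext2_mul_Ext1_apply] at h1
    have h2 : (Bop γ μ l * Bop γ μ m) p q = (Bop γ μ m * Bop γ μ l) p q := by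
      apply mul_left_cancel₀ h
      rw [Matrix.mul_apply, Matrix.mul_apply]
      simp only [Bop]
      rw [h1, mul_comm]
    exact h2
  · ext p q
    have h1 := congrFun (congrFun hRTT ((1, 1), p)) ((0, 0), q)
    rw [R12_mul_apply, mul_R12_apply, Ext1_mul_Ext2_apply, Ext2_mul_Ext1_apply] at h1
    have h2 : (Cop γ μ l * Cop γ μ m) p q = (Cop γ μ m * Cop γ μ l) p q := by
      apply mul_left_cancel₀ h
      rw [Matrix.mul_apply, Matrix.mul_apply]
      simp only [Cop]
      rw [h1, mul_comm]
    exact h2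

/-! ### Continuity and density -/

lemma continuous_Rai (γ : ℂ) (i : Fin L) (c : ℂ) :
    Continuous fun lam : ℂ => Rai γ (lam - c) i := by
  apply continuous_matrix
  intro p q
  simp only [Rai]
  apply Continuous.mul _ continuous_const
  simp only [Rmat]
  split_ifs
  · exact (Complex.continuous_sinh).comp (by continuity)
  · exact (Complex.continuous_sinh).comp (by continuity)
  · exact continuous_const
  · exact continuous_const

lemma continuous_Tmat (γ : ℂ) (μ : Fin L → ℂ) :
    Continuous fun lam : ℂ => Tmat γ μ lam := by
  simp only [Tmat, List.ofFn_eq_map]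
  exact continuous_list_prod _ fun i _ => continuous_Rai γ i (μ i)

lemma continuous_Bop (γ : ℂ) (μ : Fin L → ℂ) :
    Continuous fun lam : ℂ => Bop γ μ lam := by
  apply continuous_matrix
  intro p q
  exact ((continuous_apply _).comp ((continuous_apply _).comp (continuous_Tmat γ μ)))

lemma continuous_Cop (γ : ℂ) (μ : Fin L → ℂ) :
    Continuous fun lam : ℂ => Cop γ μ lam := by
  apply continuous_matrix
  intro p q
  exact ((continuous_apply _).comp ((continuous_apply _).comp (continuous_Tmat γ μ)))

lemma dense_good (γ m : ℂ) : Dense {l : ℂ | af γ (l - m) ≠ 0} := by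
  have hsub : {l : ℂ | af γ (l - m) = 0} ⊆
      Set.range (fun k : ℤ => m - γ - k * Real.pi * Complex.I) := by
    intro l hl
    simp only [Set.mem_setOf_eq, af] at hl
    have : Complex.sin ((l - m + γ) * Complex.I) = 0 := by
      rw [Complex.sin_mul_I, hl, zero_mul]
    rw [Complex.sin_eq_zero_iff] at this
    obtain ⟨k, hk⟩ := this
    refine ⟨k, ?_⟩
    have hI : (l - m + γ) = k * Real.pi * (-Complex.I) := by
      have := congrArg (· * (-Complex.I)) hk
      simpa [mul_assoc, Complex.I_mul_I] using this
    have : l = m - γ - k * Real.pi * Complex.I := by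
      rw [show (k : ℂ) * Real.pi * (-Complex.I) = -(k * Real.pi * Complex.I) by ring] at hI
      linear_combination hI
    exact this.symm
  have hcount : {l : ℂ | af γ (l - m) = 0}.Countable :=
    Set.Countable.mono hsub (Set.countable_range _)
  have hd := Set.Countable.dense_compl ℂ hcount
  have hset : {l : ℂ | af γ (l - m) = 0}ᶜ = {l : ℂ | af γ (l - m) ≠ 0} := by
    ext l; simp
  rwa [hset] at hd

/-- The creation operators `B` and the annihilation operators `C` form
commutative families. -/
theorem six_vertex_B_C_commute (γ : ℂ) (L : ℕ) (hL : 1 ≤ L) (μ : Fin L → ℂ)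
    (l m : ℂ) :
    Bop γ μ l * Bop γ μ m = Bop γ μ m * Bop γ μ l ∧
      Cop γ μ l * Cop γ μ m = Cop γ μ m * Cop γ μ l := by
  have hB : ∀ l' : ℂ, Bop γ μ l' * Bop γ μ m = Bop γ μ m * Bop γ μ l' := by
    have hcont1 : Continuous fun l' : ℂ => Bop γ μ l' * Bop γ μ m :=
      (continuous_Bop γ μ).mul continuous_const
    have hcont2 : Continuous fun l' : ℂ => Bop γ μ m * Bop γ μ l' :=
      continuous_const.mul (continuous_Bop γ μ)
    have heq := Continuous.ext_on (dense_good γ m) hcont1 hcont2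
      (fun l' hl' => (generic_comm γ μ l' m hl').1)
    exact fun l' => congrFun heq l'
  have hC : ∀ l' : ℂ, Cop γ μ l' * Cop γ μ m = Cop γ μ m * Cop γ μ l' := by
    have hcont1 : Continuous fun l' : ℂ => Cop γ μ l' * Cop γ μ m :=
      (continuous_Cop γ μ).mul continuous_const
    have hcont2 : Continuous fun l' : ℂ => Cop γ μ m * Cop γ μ l' :=
      continuous_const.mul (continuous_Cop γ μ)
    have heq := Continuous.ext_on (dense_good γ m) hcont1 hcont2
      (fun l' hl' => (generic_comm γ μ l' m hl').2)
    exact fun l' => congrFun heq l'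
  exact ⟨hB l, hC l⟩

end
end

section
/- Polynomial structure of the domain-wall partition function: there exists a polynomial P ∈ ℂ[x₁,…,x_L], of degree at most L−1 in each variable separately, such that for all λ₁,…,λ_L ∈ ℂ, Z(λ₁,…,λ_L) = (∏_{j=1}^{L} e^{(1−L)λ_j}) · P(e^{2λ₁},…,e^{2λ_L}). -/
noncomputable section

open Polynomial in
private lemma sinh_decomp (z c : ℂ) :
    Complex.sinh (z + c) =
      Complex.exp (-z) *
        Polynomial.eval (Complex.exp (2 * z))
          (Polynomial.C (Complex.exp c / 2) * Polynomial.X - Polynomial.C (Complex.exp (-c) / 2)) := by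
  rw [Complex.sinh]
  have h1 : Complex.exp (z + c) = Complex.exp (-z) * (Complex.exp c * Complex.exp (2 * z)) := by
    rw [← Complex.exp_add, ← Complex.exp_add]; ring_nf
  have h2 : Complex.exp (-(z + c)) = Complex.exp (-z) * Complex.exp (-c) := by
    rw [← Complex.exp_add]; ring_nf
  rw [h1, h2]
  simp only [Polynomial.eval_sub, Polynomial.eval_mul, Polynomial.eval_C, Polynomial.eval_X]
  ring

private lemma deg_helper (a b : ℂ) :
    (Polynomial.C a * Polynomial.X - Polynomial.C b).natDegree ≤ 1 := by
  apply le_trans (Polynomial.natDegree_sub_le _ _)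
  simp only [max_le_iff, Polynomial.natDegree_C]
  constructor
  · exact le_trans (Polynomial.natDegree_C_mul_le _ _) Polynomial.natDegree_X_le
  · omega

private lemma Rmat_entry (γ m : ℂ) (s r x y : Fin 2) :
    ∃ P : Polynomial ℂ,
      (P = 0 ∨ P.natDegree + (if s = r then 0 else 1) ≤ 1) ∧
      ∀ lam : ℂ, Rmat γ (lam - m) (s, x) (r, y) =
        Complex.exp (((if s = r then 0 else 1) - 1) * lam) *
          Polynomial.eval (Complex.exp (2 * lam)) P := by
  by_cases h : ((s, x) : Fin 2 × Fin 2) = (r, y)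
  · obtain ⟨rfl, rfl⟩ : s = r ∧ x = y := Prod.mk.injEq .. ▸ h
    by_cases hsx : s = x
    · refine ⟨Polynomial.C (Complex.exp (γ - m) / 2) * Polynomial.X -
        Polynomial.C (Complex.exp (-(γ - m)) / 2), Or.inr (by simpa using deg_helper _ _),
        fun lam => ?_⟩
      have : Rmat γ (lam - m) (s, x) (s, x) = af γ (lam - m) := by simp [Rmat, hsx]
      rw [this]
      have : af γ (lam - m) = Complex.sinh (lam + (γ - m)) := by rw [af]; ring_nf
      rw [this, sinh_decomp,
        show ((if s = s then (0:ℂ) else 1) - 1) * lam = -lam by rw [if_pos rfl]; ring]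
    · refine ⟨Polynomial.C (Complex.exp (-m) / 2) * Polynomial.X -
        Polynomial.C (Complex.exp (-(-m)) / 2), Or.inr (by simpa using deg_helper _ _),
        fun lam => ?_⟩
      have : Rmat γ (lam - m) (s, x) (s, x) = bf (lam - m) := by simp [Rmat, hsx]
      rw [this]
      have : bf (lam - m) = Complex.sinh (lam + -m) := by rw [bf]; ring_nf
      rw [this, sinh_decomp,
        show ((if s = s then (0:ℂ) else 1) - 1) * lam = -lam by rw [if_pos rfl]; ring]
  · by_cases hsw : s = y ∧ x = r
    · have hsr : s ≠ r := by
        rintro rfl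
        exact h (by rw [hsw.2, ← hsw.1])
      refine ⟨Polynomial.C (Complex.sinh γ), Or.inr (by simp [if_neg hsr]), fun lam => ?_⟩
      have : Rmat γ (lam - m) (s, x) (r, y) = cf γ (lam - m) := by
        simp only [Rmat]
        rw [if_neg h, if_pos (show ((s,x) : Fin 2 × Fin 2).1 = ((r,y) : Fin 2 × Fin 2).2 ∧
          ((s,x) : Fin 2 × Fin 2).2 = ((r,y) : Fin 2 × Fin 2).1 from hsw)]
      rw [this, cf]
      simp [if_neg hsr]
    · refine ⟨0, Or.inl rfl, fun lam => ?_⟩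
      have : Rmat γ (lam - m) (s, x) (r, y) = 0 := by
        simp only [Rmat]
        rw [if_neg h, if_neg (show ¬(((s,x) : Fin 2 × Fin 2).1 = ((r,y) : Fin 2 × Fin 2).2 ∧
          ((s,x) : Fin 2 × Fin 2).2 = ((r,y) : Fin 2 × Fin 2).1) from hsw)]
      rw [this]; simp


private lemma Rai_entry (γ m : ℂ) {L : ℕ} (i : Fin L) (s r : Fin 2) (p w : Fin L → Fin 2) :
    ∃ P : Polynomial ℂ,
      (P = 0 ∨ P.natDegree + (if s = r then 0 else 1) ≤ 1) ∧
      ∀ lam : ℂ, Rai γ (lam - m) i (s, p) (r, w) =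
        Complex.exp (((if s = r then 0 else 1) - 1) * lam) *
          Polynomial.eval (Complex.exp (2 * lam)) P := by
  obtain ⟨P, hd, he⟩ := Rmat_entry γ m s r (p i) (w i)
  by_cases hind : ∀ k, k ≠ i → p k = w k
  · refine ⟨P, hd, fun lam => ?_⟩
    simp only [Rai, if_pos hind, mul_one]
    exact he lam
  · exact ⟨0, Or.inl rfl, fun lam => by simp [Rai, if_neg hind]⟩

private lemma prod_entry (γ : ℂ) {L : ℕ} (l : List (ℂ × Fin L)) :
    ∀ (s t : Fin 2) (p q : Fin L → Fin 2),
      ∃ P : Polynomial ℂ,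
        (P = 0 ∨ P.natDegree + (if s = t then 0 else 1) ≤ l.length) ∧
        ∀ lam : ℂ, ((l.map fun mi => Rai γ (lam - mi.1) mi.2).prod) (s, p) (t, q) =
          Complex.exp (((if s = t then 0 else 1) - (l.length : ℂ)) * lam) *
            Polynomial.eval (Complex.exp (2 * lam)) P := by
  induction l with
  | nil =>
    intro s t p q
    by_cases hst : s = t
    · subst hst
      refine ⟨if p = q then 1 else 0, Or.inr (by split <;> simp), fun lam => ?_⟩
      simp only [List.map_nil, List.prod_nil, List.length_nil, if_pos rfl]
      rw [Matrix.one_apply]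
      norm_num
      split <;> simp_all
    · refine ⟨0, Or.inl rfl, fun lam => ?_⟩
      simp only [List.map_nil, List.prod_nil]
      rw [Matrix.one_apply_ne (by simp [hst])]
      simp
  | cons mi l ih =>
    intro s t p q
    simp only [List.length_cons]
    have key : ∀ x : Fin 2 × (Fin L → Fin 2),
        ∃ Q : Polynomial ℂ,
          (Q = 0 ∨ Q.natDegree + (if s = t then 0 else 1) ≤ l.length + 1) ∧
          ∀ lam : ℂ, Rai γ (lam - mi.1) mi.2 (s, p) x *
              ((l.map fun mj => Rai γ (lam - mj.1) mj.2).prod) x (t, q) =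
            Complex.exp (((if s = t then 0 else 1) - ((l.length : ℂ) + 1)) * lam) *
              Polynomial.eval (Complex.exp (2 * lam)) Q := by
      rintro ⟨r, w⟩
      obtain ⟨P₁, hd₁, he₁⟩ := Rai_entry γ mi.1 mi.2 s r p w
      obtain ⟨P₂, hd₂, he₂⟩ := ih r t w q
      by_cases hsr : s = r <;> by_cases hrt : r = t
      · -- s = r = t
        have hst : s = t := hsr.trans hrt
        refine ⟨P₁ * P₂, ?_, fun lam => ?_⟩
        · rcases hd₁ with rfl | h₁
          · exact Or.inl (zero_mul _)
          rcases hd₂ with rfl | h₂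
          · exact Or.inl (mul_zero _)
          refine Or.inr ?_
          simp only [if_pos hsr, if_pos hrt, if_pos hst] at *
          have := Polynomial.natDegree_mul_le (p := P₁) (q := P₂)
          omega
        · rw [he₁ lam, he₂ lam, Polynomial.eval_mul]
          simp only [if_pos hsr, if_pos hrt, if_pos hst]
          have hE : Complex.exp (((0:ℂ) - 1) * lam) *
              Complex.exp ((0 - (l.length : ℂ)) * lam) =
              Complex.exp ((0 - ((l.length : ℂ) + 1)) * lam) := by
            rw [← Complex.exp_add]; congr 1; ring
          linear_combination (Polynomial.eval (Complex.exp (2*lam)) P₁ *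
            Polynomial.eval (Complex.exp (2*lam)) P₂) * hE
      · -- s = r, r ≠ t, so s ≠ t
        have hst : ¬ s = t := fun h => hrt (hsr.symm.trans h)
        refine ⟨P₁ * P₂, ?_, fun lam => ?_⟩
        · rcases hd₁ with rfl | h₁
          · exact Or.inl (zero_mul _)
          rcases hd₂ with rfl | h₂
          · exact Or.inl (mul_zero _)
          refine Or.inr ?_
          simp only [if_pos hsr, if_neg hrt, if_neg hst] at *
          have := Polynomial.natDegree_mul_le (p := P₁) (q := P₂)
          omega
        · rw [he₁ lam, he₂ lam, Polynomial.eval_mul]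
          simp only [if_pos hsr, if_neg hrt, if_neg hst]
          have hE : Complex.exp (((0:ℂ) - 1) * lam) *
              Complex.exp ((1 - (l.length : ℂ)) * lam) =
              Complex.exp ((1 - ((l.length : ℂ) + 1)) * lam) := by
            rw [← Complex.exp_add]; congr 1; ring
          linear_combination (Polynomial.eval (Complex.exp (2*lam)) P₁ *
            Polynomial.eval (Complex.exp (2*lam)) P₂) * hE
      · -- s ≠ r, r = t, so s ≠ t
        have hst : ¬ s = t := fun h => hsr (h.trans hrt.symm)
        refine ⟨P₁ * P₂, ?_, fun lam => ?_⟩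
        · rcases hd₁ with rfl | h₁
          · exact Or.inl (zero_mul _)
          rcases hd₂ with rfl | h₂
          · exact Or.inl (mul_zero _)
          refine Or.inr ?_
          simp only [if_neg hsr, if_pos hrt, if_neg hst] at *
          have := Polynomial.natDegree_mul_le (p := P₁) (q := P₂)
          omega
        · rw [he₁ lam, he₂ lam, Polynomial.eval_mul]
          simp only [if_neg hsr, if_pos hrt, if_neg hst]
          have hE : Complex.exp (((1:ℂ) - 1) * lam) *
              Complex.exp ((0 - (l.length : ℂ)) * lam) =
              Complex.exp ((1 - ((l.length : ℂ) + 1)) * lam) := by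
            rw [← Complex.exp_add]; congr 1; ring
          linear_combination (Polynomial.eval (Complex.exp (2*lam)) P₁ *
            Polynomial.eval (Complex.exp (2*lam)) P₂) * hE
      · -- s ≠ r, r ≠ t, so s = t (in Fin 2)
        have hst : s = t := by fin_cases s <;> fin_cases r <;> fin_cases t <;> simp_all
        refine ⟨Polynomial.X * (P₁ * P₂), ?_, fun lam => ?_⟩
        · rcases hd₁ with rfl | h₁
          · exact Or.inl (by ring)
          rcases hd₂ with rfl | h₂
          · exact Or.inl (by ring)
          refine Or.inr ?_
          simp only [if_neg hsr, if_neg hrt, if_pos hst] at *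
          have h3 := Polynomial.natDegree_mul_le (p := P₁) (q := P₂)
          have h4 := Polynomial.natDegree_mul_le (p := (Polynomial.X : Polynomial ℂ))
            (q := P₁ * P₂)
          have h5 : (Polynomial.X : Polynomial ℂ).natDegree = 1 := Polynomial.natDegree_X
          omega
        · rw [he₁ lam, he₂ lam, Polynomial.eval_mul, Polynomial.eval_mul, Polynomial.eval_X]
          simp only [if_neg hsr, if_neg hrt, if_pos hst]
          have hE : Complex.exp (((1:ℂ) - 1) * lam) *
              Complex.exp ((1 - (l.length : ℂ)) * lam) =
              Complex.exp ((0 - ((l.length : ℂ) + 1)) * lam) * Complex.exp (2 * lam) := by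
            rw [← Complex.exp_add, ← Complex.exp_add]; congr 1; ring
          linear_combination (Polynomial.eval (Complex.exp (2*lam)) P₁ *
            Polynomial.eval (Complex.exp (2*lam)) P₂) * hE
    choose Q hQd hQe using key
    refine ⟨∑ x : Fin 2 × (Fin L → Fin 2), Q x, ?_, fun lam => ?_⟩
    · have hb : ∀ x ∈ Finset.univ, (Q x).natDegree ≤ l.length + 1 - (if s = t then 0 else 1) := by
        intro x _
        rcases hQd x with h | h
        · rw [h]; simp
        · by_cases hst : s = t
          · simp only [if_pos hst] at h ⊢; omega
          · simp only [if_neg hst] at h ⊢; omega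
      refine Or.inr ?_
      have hs := Polynomial.natDegree_sum_le_of_forall_le Finset.univ Q hb
      by_cases hst : s = t
      · simp only [if_pos hst] at hs ⊢; omega
      · simp only [if_neg hst] at hs ⊢; omega
    · rw [List.map_cons, List.prod_cons, Matrix.mul_apply]
      have : ∀ x : Fin 2 × (Fin L → Fin 2), Rai γ (lam - mi.1) mi.2 (s, p) x *
          ((l.map fun mj => Rai γ (lam - mj.1) mj.2).prod) x (t, q) =
          Complex.exp (((if s = t then 0 else 1) - ((l.length : ℂ) + 1)) * lam) *
            Polynomial.eval (Complex.exp (2 * lam)) (Q x) := fun x => hQe x lam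
      rw [Finset.sum_congr rfl (fun x _ => this x), ← Finset.mul_sum,
        Polynomial.eval_finset_sum]
      push_cast
      ring_nf


/-- The domain-wall-boundary partition function of the six-vertex model,
`Z(λ₁,…,λ_L) = ⟨0̄| B(λ₁) B(λ₂) ⋯ B(λ_L) |0⟩`. -/
def Zfun (γ : ℂ) {L : ℕ} (μ : Fin L → ℂ) (lam : Fin L → ℂ) : ℂ :=
  dotProduct
    (Matrix.vecMul v0bar ((List.ofFn fun i : Fin L => Bop γ μ (lam i)).prod))
    v0

private lemma Bop_poly (γ : ℂ) {L : ℕ} (hL : 1 ≤ L) (μ : Fin L → ℂ) (p q : Fin L → Fin 2) :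
    ∃ P : Polynomial ℂ, P.natDegree ≤ L - 1 ∧
      ∀ lam : ℂ, Bop γ μ lam p q =
        Complex.exp ((1 - (L : ℂ)) * lam) * Polynomial.eval (Complex.exp (2 * lam)) P := by
  obtain ⟨P, hd, he⟩ := prod_entry γ (List.ofFn fun i : Fin L => (μ i, i)) 0 1 p q
  have hlen : (List.ofFn fun i : Fin L => (μ i, i)).length = L := List.length_ofFn
  have h01 : ((0 : Fin 2) = 1) = False := by simp
  refine ⟨P, ?_, fun lam => ?_⟩
  · rcases hd with rfl | h
    · simp
    · rw [hlen] at h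
      simp only [h01, if_false] at h
      omega
  · have hmap : ((List.ofFn fun i : Fin L => (μ i, i)).map
        fun mi => Rai γ (lam - mi.1) mi.2) = List.ofFn fun i : Fin L => Rai γ (lam - μ i) i := by
      rw [List.map_ofFn]
      rfl
    have := he lam
    rw [hmap, hlen] at this
    simp only [h01, if_false] at this
    rw [Bop, Tmat, this]

private lemma eval_comm {L : ℕ} (v : Fin L → ℂ) (j : Fin L) (P : Polynomial ℂ) :
    MvPolynomial.eval v (Polynomial.eval₂ MvPolynomial.C (MvPolynomial.X j) P) =
      Polynomial.eval (v j) P := by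
  rw [Polynomial.hom_eval₂]
  have h1 : (MvPolynomial.eval v).comp (MvPolynomial.C) = RingHom.id ℂ := by
    ext c; simp
  have h2 : MvPolynomial.eval v (MvPolynomial.X j) = v j := by simp
  rw [h1, h2]
  rfl

private lemma ofFn_smul_prod {ι : Type*} [Fintype ι] [DecidableEq ι] :
    ∀ (n : ℕ) (c : Fin n → ℂ) (A : Fin n → Matrix ι ι ℂ),
      (List.ofFn fun j => c j • A j).prod = (∏ j, c j) • (List.ofFn A).prod
  | 0, c, A => by simp
  | (n + 1), c, A => by
    rw [List.ofFn_succ, List.ofFn_succ, List.prod_cons, List.prod_cons,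
      ofFn_smul_prod n (fun j => c j.succ) (fun j => A j.succ),
      Fin.prod_univ_succ, smul_mul_assoc, mul_smul_comm, smul_smul]

private lemma degreeOf_finset_sum_le {σ ι : Type*} (i : σ) (s : Finset ι)
    (f : ι → MvPolynomial σ ℂ) (D : ℕ) (h : ∀ x ∈ s, MvPolynomial.degreeOf i (f x) ≤ D) :
    MvPolynomial.degreeOf i (∑ x ∈ s, f x) ≤ D := by
  refine le_trans (MvPolynomial.degreeOf_sum_le i s f) ?_
  exact Finset.sup_le h

private lemma degreeOf_list_prod {σ ι : Type*} [Fintype ι] [DecidableEq ι] (i : σ) :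
    ∀ (n : ℕ) (A : Fin n → Matrix ι ι (MvPolynomial σ ℂ)) (d : Fin n → ℕ),
      (∀ j p q, MvPolynomial.degreeOf i (A j p q) ≤ d j) →
      ∀ p q, MvPolynomial.degreeOf i ((List.ofFn A).prod p q) ≤ ∑ j, d j
  | 0, A, d, h, p, q => by
    simp only [List.ofFn_zero, List.prod_nil, Fin.sum_univ_zero]
    rw [Matrix.one_apply]
    have h1 : MvPolynomial.degreeOf i (1 : MvPolynomial σ ℂ) = 0 := by
      rw [show (1 : MvPolynomial σ ℂ) = MvPolynomial.C 1 from (map_one MvPolynomial.C).symm,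
        MvPolynomial.degreeOf_C]
    split <;> simp [h1]
  | (n + 1), A, d, h, p, q => by
    rw [List.ofFn_succ, List.prod_cons, Matrix.mul_apply, Fin.sum_univ_succ]
    refine degreeOf_finset_sum_le i _ _ _ (fun x _ => ?_)
    refine le_trans (MvPolynomial.degreeOf_mul_le _ _ _) ?_
    exact add_le_add (h 0 p x)
      (degreeOf_list_prod i n (fun j => A j.succ) (fun j => d j.succ)
        (fun j p q => h j.succ p q) x q)

private lemma degreeOf_eval₂_le {σ : Type*} [DecidableEq σ] (i j : σ) (P : Polynomial ℂ)
    (D : ℕ) (hD : P.natDegree ≤ D) :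
    MvPolynomial.degreeOf i (Polynomial.eval₂ MvPolynomial.C (MvPolynomial.X j) P) ≤
      if j = i then D else 0 := by
  rw [Polynomial.eval₂_eq_sum, Polynomial.sum]
  refine degreeOf_finset_sum_le i _ _ _ (fun e he => ?_)
  have hxe : MvPolynomial.degreeOf i ((MvPolynomial.X j : MvPolynomial σ ℂ) ^ e) ≤
      if j = i then e else 0 := by
    refine le_trans (MvPolynomial.degreeOf_pow_le _ _ _) ?_
    rw [MvPolynomial.degreeOf_X]
    by_cases hij : j = i
    · subst hij; simp
    · rw [if_neg (fun hh : i = j => hij hh.symm), if_neg hij]; simp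
  refine le_trans (MvPolynomial.degreeOf_mul_le _ _ _) ?_
  rw [MvPolynomial.degreeOf_C]
  have he' : e ≤ D := le_trans (Polynomial.le_natDegree_of_mem_supp e he) hD
  by_cases hij : j = i
  · rw [if_pos hij] at hxe ⊢; omega
  · rw [if_neg hij] at hxe ⊢; omega

/-- Polynomial structure of the domain-wall partition function: `Z` equals
`(∏_j e^{(1−L)λ_j})` times a polynomial of degree at most `L−1` in each of the
variables `e^{2λ_j}`. -/
theorem Z_polynomial_structure (γ : ℂ) (L : ℕ) (hL : 1 ≤ L) (μ : Fin L → ℂ) :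
    ∃ P : MvPolynomial (Fin L) ℂ,
      (∀ i, P.degreeOf i ≤ L - 1) ∧
      ∀ lam : Fin L → ℂ,
        Zfun γ μ lam =
          (∏ j, Complex.exp ((1 - (L : ℂ)) * lam j)) *
            MvPolynomial.eval (fun i => Complex.exp (2 * lam i)) P := by
  choose Pm hPdeg hPev using fun p q => Bop_poly γ hL μ p q
  set Mmv : Fin L → Matrix (Fin L → Fin 2) (Fin L → Fin 2) (MvPolynomial (Fin L) ℂ) :=
    fun j p q => Polynomial.eval₂ MvPolynomial.C (MvPolynomial.X j) (Pm p q) with hMmv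
  refine ⟨(List.ofFn Mmv).prod (fun _ => 1) (fun _ => 0), ?_, ?_⟩
  · intro i
    have hd := degreeOf_list_prod i L Mmv (fun j => if j = i then L - 1 else 0)
      (fun j p q => degreeOf_eval₂_le i j (Pm p q) (L - 1) (hPdeg p q)) (fun _ => 1) (fun _ => 0)
    rwa [Finset.sum_ite_eq' Finset.univ i, if_pos (Finset.mem_univ i)] at hd
  · intro lam
    set ψ : MvPolynomial (Fin L) ℂ →+* ℂ :=
      (MvPolynomial.eval (fun i => Complex.exp (2 * lam i))) with hψ
    have hB : ∀ j : Fin L, Bop γ μ (lam j) =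
        Complex.exp ((1 - (L : ℂ)) * lam j) • ((Mmv j).map ψ) := by
      intro j
      ext p q
      rw [Matrix.smul_apply, Matrix.map_apply, hMmv]
      rw [show ψ (Polynomial.eval₂ MvPolynomial.C (MvPolynomial.X j) (Pm p q)) =
        Polynomial.eval (Complex.exp (2 * lam j)) (Pm p q) from eval_comm _ j _]
      rw [hPev p q (lam j)]
      rfl
    have hmapprod : ((List.ofFn Mmv).prod).map ψ =
        (List.ofFn fun j => (Mmv j).map ψ).prod := by
      have := map_list_prod (ψ.mapMatrix :
        Matrix (Fin L → Fin 2) (Fin L → Fin 2) (MvPolynomial (Fin L) ℂ) →+*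
          Matrix (Fin L → Fin 2) (Fin L → Fin 2) ℂ) (List.ofFn Mmv)
      rw [List.map_ofFn] at this
      exact this
    have hprod : (List.ofFn fun j : Fin L => Bop γ μ (lam j)).prod =
        (∏ j, Complex.exp ((1 - (L : ℂ)) * lam j)) • (((List.ofFn Mmv).prod).map ψ) := by
      have h1 : (List.ofFn fun j : Fin L => Bop γ μ (lam j)) =
          List.ofFn fun j : Fin L =>
            Complex.exp ((1 - (L : ℂ)) * lam j) • ((Mmv j).map ψ) := by
        congr 1
        funext j
        exact hB j
      rw [h1, ofFn_smul_prod L _ _, hmapprod]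
    have hZ : Zfun γ μ lam =
        ((List.ofFn fun i : Fin L => Bop γ μ (lam i)).prod) (fun _ => 1) (fun _ => 0) := by
      rw [Zfun, dotProduct]
      have hvm : ∀ q, Matrix.vecMul v0bar
          ((List.ofFn fun i : Fin L => Bop γ μ (lam i)).prod) q =
          ((List.ofFn fun i : Fin L => Bop γ μ (lam i)).prod) (fun _ => 1) q := by
        intro q
        rw [Matrix.vecMul]
        simp [v0bar, dotProduct, ite_mul, Finset.sum_ite_eq']
      rw [Finset.sum_congr rfl (fun q _ => by rw [hvm q])]
      simp [v0, mul_ite, Finset.sum_ite_eq']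
    rw [hZ, hprod, Matrix.smul_apply, Matrix.map_apply]
    rfl

end
end
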